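/- Suppose p = (0,0) and q = (c,d) are lattice points with d ≤ -2, q is not visible from p, and there are lattice points (a,-1), (a+1,-1), (a+2,-1), (a+3,-1) all visible from both p and q in the convex hull of {p, q, (a,-1), (a+3,-1)}. If additionally no segment from p to one of these four points crosses a segment from q to one of them, and d is constrained so that the analogous four-in-a-row visibility argument applies from q, then d = -2 and c is even. -/

import Mathlib

/-- The canonical embedding of `ℤ × ℤ` into `ℝ × ℝ`. -/
noncomputable def latticeCast (p : ℤ × ℤ) : ℝ × ℝ := ((p.1 : ℝ), (p.2 : ℝ))

/-- Two lattice points are visible to one another if the closed segment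
joining them contains no lattice point besides the endpoints. -/
def Visible (p q : ℤ × ℤ) : Prop :=
  ∀ r : ℤ × ℤ, latticeCast r ∈ segment ℝ (latticeCast p) (latticeCast q) → r = p ∨ r = q

/-- Two closed segments cross if they share a point that is not a common endpoint. -/
def SegCross (a b a' b' : ℝ × ℝ) : Prop :=
  ∃ x : ℝ × ℝ, x ∈ segment ℝ a b ∧ x ∈ segment ℝ a' b' ∧
    ¬((x = a ∨ x = b) ∧ (x = a' ∨ x = b'))

lemma mem_segment_of_coords {p q x : ℝ × ℝ} (t : ℝ)
    (h0 : 0 ≤ t) (h1 : t ≤ 1)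
    (hx : x.1 = (1 - t) * p.1 + t * q.1) (hy : x.2 = (1 - t) * p.2 + t * q.2) :
    x ∈ segment ℝ p q := by
  refine ⟨1 - t, t, by linarith, h0, by ring, ?_⟩
  have : ((1 - t) • p + t • q) = (((1-t) * p.1 + t * q.1), ((1-t) * p.2 + t * q.2)) := by
    simp [Prod.ext_iff, Prod.smul_fst, Prod.smul_snd, smul_eq_mul]
  rw [this]
  exact (Prod.ext_iff.mpr ⟨hx, hy⟩).symm

lemma not_vis_of_mid (p q m : ℤ × ℤ) (t : ℝ) (h0 : 0 < t) (h1 : t < 1)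
    (hx : (m.1 : ℝ) = (1 - t) * p.1 + t * q.1)
    (hy : (m.2 : ℝ) = (1 - t) * p.2 + t * q.2)
    (hmp : m ≠ p) (hmq : m ≠ q) : ¬ Visible p q := by
  intro h
  have hmem : latticeCast m ∈ segment ℝ (latticeCast p) (latticeCast q) :=
    mem_segment_of_coords t h0.le h1.le hx hy
  rcases h m hmem with h' | h'
  · exact hmp h'
  · exact hmq h'

lemma vis_coprime (c d : ℤ) (hd : d ≠ 0) (h : Int.gcd c d = 1) :
    Visible (0, 0) (c, d) := by
  intro r hr
  rw [segment_eq_image] at hr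
  obtain ⟨t, ht, hrt⟩ := hr
  have hx : t * c = (r.1 : ℝ) := by
    have := congrArg Prod.fst hrt
    simpa [latticeCast, smul_eq_mul] using this
  have hy : t * d = (r.2 : ℝ) := by
    have := congrArg Prod.snd hrt
    simpa [latticeCast, smul_eq_mul] using this
  have key : r.1 * d = r.2 * c := by
    have : (r.1 : ℝ) * d = (r.2 : ℝ) * c := by
      rw [← hx, ← hy]; ring
    exact_mod_cast this
  have hco : IsCoprime d c := (Int.isCoprime_iff_gcd_eq_one.mpr h).symm
  have hdvd : d ∣ r.2 * c := ⟨r.1, by linarith⟩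
  obtain ⟨j, hj⟩ : d ∣ r.2 := hco.dvd_of_dvd_mul_right hdvd
  have htj : t = (j : ℝ) := by
    have h1 : t * d = (j : ℝ) * d := by rw [hy]; push_cast [hj]; ring
    have hdr : (d : ℝ) ≠ 0 := Int.cast_ne_zero.mpr hd
    exact mul_right_cancel₀ hdr h1
  have hj01 : j = 0 ∨ j = 1 := by
    obtain ⟨ht0, ht1⟩ := ht
    rw [htj] at ht0 ht1
    have h0' : (0 : ℤ) ≤ j := by exact_mod_cast ht0
    have h1' : j ≤ 1 := by exact_mod_cast ht1
    omega
  rcases hj01 with hj0 | hj1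
  · left
    have hr2 : r.2 = 0 := by rw [hj, hj0, mul_zero]
    have hr1 : (r.1 : ℝ) = 0 := by rw [← hx, htj, hj0]; simp
    have hr1' : r.1 = 0 := by exact_mod_cast hr1
    exact Prod.ext_iff.mpr ⟨hr1', hr2⟩
  · right
    have hr2 : r.2 = d := by rw [hj, hj1, mul_one]
    have hr1 : (r.1 : ℝ) = c := by rw [← hx, htj, hj1]; simp
    have hr1' : r.1 = c := by exact_mod_cast hr1
    exact Prod.ext_iff.mpr ⟨hr1', hr2⟩

theorem second_diploptigon_point (c d a : ℤ) (hd : d ≤ -2)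
    (hnotvis : ¬ Visible (0, 0) (c, d))
    (H : Set (ℝ × ℝ))
    (hH : H = convexHull ℝ ({latticeCast (0, 0), latticeCast (c, d),
      latticeCast (a, -1), latticeCast (a + 3, -1)} : Set (ℝ × ℝ)))
    (hin : ∀ i : Fin 4, latticeCast (a + (i : ℤ), -1) ∈ H)
    (hvisp : ∀ i : Fin 4, Visible (0, 0) (a + (i : ℤ), -1))
    (hvisq : ∀ i : Fin 4, Visible (c, d) (a + (i : ℤ), -1))
    (hnocross : ∀ i j : Fin 4,
      ¬ SegCross (latticeCast (0, 0)) (latticeCast (a + (i : ℤ), -1))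
        (latticeCast (c, d)) (latticeCast (a + (j : ℤ), -1)))
    -- the analogous visibility argument applies from q: every lattice point of H
    -- other than p = (0,0) is visible from q
    (hq : ∀ r : ℤ × ℤ, latticeCast r ∈ H → r ≠ (0, 0) → Visible (c, d) r) :
    d = -2 ∧ Even c := by
  have hd0 : d ≠ 0 := by omega
  have hconv : Convex ℝ H := hH ▸ convex_convexHull ℝ _
  have hpH : latticeCast (0, 0) ∈ H := by
    rw [hH]; exact subset_convexHull ℝ _ (by simp)
  have hqH : latticeCast (c, d) ∈ H := by
    rw [hH]; exact subset_convexHull ℝ _ (by simp)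
  have haH : latticeCast (a, -1) ∈ H := by
    rw [hH]; exact subset_convexHull ℝ _ (by simp)
  have ha3H : latticeCast (a + 3, -1) ∈ H := by
    rw [hH]; exact subset_convexHull ℝ _ (by simp)
  set g : ℕ := Int.gcd c d with hgdef
  have hg1 : g ≠ 1 := fun h1 => hnotvis (vis_coprime c d hd0 h1)
  have hg0 : g ≠ 0 := by
    intro h0
    exact hd0 (Int.gcd_eq_zero_iff.mp h0).2
  obtain ⟨u, hu⟩ : (g : ℤ) ∣ c := Int.gcd_dvd_left c d
  obtain ⟨w, hw⟩ : (g : ℤ) ∣ d := Int.gcd_dvd_right c d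
  have hw0 : w ≠ 0 := by
    intro h0; rw [h0, mul_zero] at hw; exact hd0 hw
  -- g = 2
  have hg2 : g = 2 := by
    by_contra hne
    have hg3 : 3 ≤ g := by omega
    have hG1 : (1 : ℝ) < (g : ℝ) := by exact_mod_cast (by omega : 1 < g)
    -- the point (u, w) is in H
    have huwH : latticeCast (u, w) ∈ H := by
      refine hconv.segment_subset hpH hqH ?_
      refine mem_segment_of_coords (1 / (g : ℝ)) (by positivity) (by
        rw [div_le_one (by linarith)]; linarith) ?_ ?_
      · simp only [latticeCast]
        rw [hu]; push_cast; field_simp; ring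
      · simp only [latticeCast]
        rw [hw]; push_cast; field_simp; ring
    have hvis : Visible (c, d) (u, w) := hq (u, w) huwH (by
      intro h0
      exact hw0 (by simpa using congrArg Prod.snd h0))
    -- but (2u, 2w) is strictly between (c,d) and (u,w)
    refine not_vis_of_mid (c, d) (u, w) (2 * u, 2 * w) (((g : ℝ) - 2) / ((g : ℝ) - 1))
      (by
        apply div_pos <;> [skip; linarith]
        have : (3 : ℝ) ≤ (g : ℝ) := by exact_mod_cast hg3
        linarith)
      (by
        rw [div_lt_one (by linarith)]; linarith)
      ?_ ?_ ?_ ?_ hvis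
    · have key : (1 - ((g:ℝ)-2)/((g:ℝ)-1)) * ((g:ℝ) * (u:ℝ))
          + (((g:ℝ)-2)/((g:ℝ)-1)) * (u:ℝ) = 2 * (u:ℝ) := by
        have h : (g:ℝ) - 1 ≠ 0 := by linarith
        field_simp
        ring
      simp only
      rw [hu]; push_cast
      linear_combination key.symm
    · have key : (1 - ((g:ℝ)-2)/((g:ℝ)-1)) * ((g:ℝ) * (w:ℝ))
          + (((g:ℝ)-2)/((g:ℝ)-1)) * (w:ℝ) = 2 * (w:ℝ) := by
        have h : (g:ℝ) - 1 ≠ 0 := by linarith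
        field_simp
        ring
      simp only
      rw [hw]; push_cast
      linear_combination key.symm
    · intro h0
      have h2 := congrArg Prod.snd h0
      simp only at h2
      rw [hw] at h2
      have : (g : ℤ) = 2 := by
        have := mul_right_cancel₀ hw0 (by linarith : 2 * w = (g : ℤ) * w)
        omega
      omega
    · intro h0
      have h2 := congrArg Prod.snd h0
      simp only at h2
      omega
  -- so c and d are even
  have hceven : Even c := ⟨u, by rw [hu, hg2]; push_cast; ring⟩
  have hdw : d = 2 * w := by rw [hw, hg2]; push_cast; ring
  -- now show d = -2
  by_contra hcon
  push_neg at hcon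
  have hd4 : d ≤ -4 := by
    have : d ≠ -2 := fun h => hcon h hceven
    omega
  -- cross-section of H at height -2
  set s : ℝ := ((d : ℝ) + 2) / ((d : ℝ) + 1) with hsdef
  have hdr : (d : ℝ) ≤ -4 := by exact_mod_cast hd4
  have hs0 : 0 < s := div_pos_of_neg_of_neg (by linarith) (by linarith)
  have hs1 : s < 1 := by
    rw [hsdef, div_lt_one_of_neg (by linarith : (d:ℝ) + 1 < 0)]
    linarith
  have hs23 : 2 ≤ 3 * s := by
    rw [hsdef, ← mul_div_assoc, le_div_iff_of_neg (by linarith : (d:ℝ) + 1 < 0)]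
    linarith
  set L : ℝ := (1 - s) * (c : ℝ) + s * (a : ℝ) with hLdef
  set n : ℤ := ⌈(L - (c : ℝ)) / 2⌉ with hndef
  set e : ℤ := c + 2 * n with hedef
  have hn1 : (L - (c : ℝ)) / 2 ≤ (n : ℝ) := Int.le_ceil _
  have hn2 : (n : ℝ) < (L - (c : ℝ)) / 2 + 1 := Int.ceil_lt_add_one _
  have heL : L ≤ (e : ℝ) := by push_cast [hedef]; linarith
  have heR : (e : ℝ) ≤ L + 3 * s := by push_cast [hedef]; linarith
  -- the two boundary points of H at height -2
  have hA : ((L, -2) : ℝ × ℝ) ∈ H := by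
    refine hconv.segment_subset hqH haH ?_
    refine mem_segment_of_coords s hs0.le hs1.le ?_ ?_
    · simp [latticeCast, hLdef]
    · simp only [latticeCast]
      push_cast
      have h1 : (d:ℝ) + 1 ≠ 0 := by linarith
      rw [hsdef]
      field_simp
      ring
  have hB : ((L + 3 * s, -2) : ℝ × ℝ) ∈ H := by
    refine hconv.segment_subset hqH ha3H ?_
    refine mem_segment_of_coords s hs0.le hs1.le ?_ ?_
    · simp only [latticeCast]
      push_cast
      rw [hLdef]
      ring
    · simp only [latticeCast]
      push_cast
      have h1 : (d:ℝ) + 1 ≠ 0 := by linarith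
      rw [hsdef]
      field_simp
      ring
  have hreH : latticeCast (e, -2) ∈ H := by
    refine hconv.segment_subset hA hB ?_
    refine mem_segment_of_coords (((e : ℝ) - L) / (3 * s))
      (div_nonneg (by linarith) (by linarith))
      (by rw [div_le_one (by linarith)]; linarith) ?_ ?_
    · simp only [latticeCast]
      field_simp
      ring
    · simp [latticeCast]; ring
  have hvis : Visible (c, d) (e, -2) := hq (e, -2) hreH (by
    intro h0
    have := congrArg Prod.snd h0
    simp at this)
  -- but (c + n, w - 1) is a lattice point strictly between (c,d) and (e,-2)
  refine not_vis_of_mid (c, d) (e, -2) (c + n, w - 1) (1 / 2) (by norm_num) (by norm_num)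
    ?_ ?_ ?_ ?_ hvis
  · simp only
    push_cast [hedef]
    ring
  · simp only
    have : (d : ℝ) = 2 * (w : ℝ) := by exact_mod_cast hdw
    push_cast
    rw [this]
    ring
  · intro h0
    have h2 := congrArg Prod.snd h0
    simp only at h2
    omega
  · intro h0
    have h2 := congrArg Prod.snd h0
    simp only at h2
    omega
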